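/- If U_1,…,U_n are i.i.d. uniform random variables on [0,1], then for any δ ∈ (0,1), P( Σ_{i=1}^n (−ln U_i) > n + √(2n·ln(1/δ)) + ln(1/δ) ) ≤ δ. -/

import Mathlib

open MeasureTheory
open scoped ENNReal

lemma aux_log (x : ℝ) (hx : 1 ≤ x) : Real.log x ≤ (x - x⁻¹) / 2 := by
  have key : MonotoneOn (fun y : ℝ => (y - y⁻¹) / 2 - Real.log y) (Set.Ici 1) := by
    have hderiv : ∀ y ∈ interior (Set.Ici (1:ℝ)),
        HasDerivAt (fun y : ℝ => (y - y⁻¹) / 2 - Real.log y) ((1 - y⁻¹)^2 / 2) y := by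
      intro y hy
      rw [interior_Ici] at hy
      have hy0 : y ≠ 0 := by intro h; simp [h] at hy; linarith
      have h1 : HasDerivAt (fun y : ℝ => (y - y⁻¹) / 2 - Real.log y)
          ((1 - -(y^2)⁻¹) / 2 - y⁻¹) y :=
        (((hasDerivAt_id y).sub (hasDerivAt_inv hy0)).div_const 2).sub (Real.hasDerivAt_log hy0)
      convert h1 using 1
      field_simp
      ring
    apply monotoneOn_of_deriv_nonneg (convex_Ici 1)
    · apply ContinuousOn.sub
      · exact (continuousOn_id.sub (continuousOn_inv₀.mono (by
          intro y hy; simp only [Set.mem_compl_iff, Set.mem_singleton_iff]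
          intro h; rw [h] at hy; exact absurd hy (by norm_num)))).div_const 2
      · exact Real.continuousOn_log.mono (by
          intro y hy h
          rw [Set.mem_singleton_iff] at h; rw [h] at hy; exact absurd hy (by norm_num))
    · intro y hy
      exact (hderiv y hy).differentiableAt.differentiableWithinAt
    · intro y hy
      rw [(hderiv y hy).deriv]
      positivity
  have h0 : (fun y : ℝ => (y - y⁻¹) / 2 - Real.log y) 1 = 0 := by norm_num
  have := key (Set.self_mem_Ici) hx hx
  simp only [h0] at this
  linarith [this]

lemma lintegral_pi_pow {n : ℕ} (ν : Measure ℝ) [SigmaFinite ν] {g : ℝ → ℝ≥0∞}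
    (hg : Measurable g) :
    ∫⁻ x : Fin n → ℝ, ∏ i, g (x i) ∂Measure.pi (fun _ => ν) = (∫⁻ x, g x ∂ν) ^ n := by
  induction n with
  | zero => simp [lintegral_const, Measure.pi_empty_univ]
  | succ n ih =>
    have hprod : Measurable fun x : Fin n → ℝ => ∏ i, g (x i) :=
      Finset.measurable_prod _ fun i _ => hg.comp (measurable_pi_apply i)
    rw [← ((MeasureTheory.measurePreserving_piFinSuccAbove (fun _ : Fin (n+1) => ν) 0).symm).lintegral_comp_emb
      (MeasurableEquiv.measurableEmbedding _)]
    simp_rw [MeasurableEquiv.piFinSuccAbove_symm_apply, Fin.insertNthEquiv, Equiv.coe_fn_mk,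
      Fin.insertNth_zero, Fin.prod_univ_succ, Fin.cons_zero, Fin.cons_succ]
    simp only [cast_eq]
    rw [lintegral_prod_mul hg.aemeasurable hprod.aemeasurable, ih, pow_succ']

lemma coord_integral {l : ℝ} (h1 : l < 1) :
    ∫⁻ x in Set.Icc (0:ℝ) 1, ENNReal.ofReal (Real.exp (-(l * Real.log x)))
      = ENNReal.ofReal (1 / (1 - l)) := by
  have hIoc : ∫⁻ x in Set.Icc (0:ℝ) 1, ENNReal.ofReal (Real.exp (-(l * Real.log x)))
      = ∫⁻ x in Set.Ioc (0:ℝ) 1, ENNReal.ofReal (Real.exp (-(l * Real.log x))) :=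
    (setLIntegral_congr MeasureTheory.Ioc_ae_eq_Icc).symm
  rw [hIoc]
  have hcong : ∫⁻ x in Set.Ioc (0:ℝ) 1, ENNReal.ofReal (Real.exp (-(l * Real.log x)))
      = ∫⁻ x in Set.Ioc (0:ℝ) 1, ENNReal.ofReal (x ^ (-l)) := by
    apply setLIntegral_congr_fun measurableSet_Ioc
    intro x hx
    beta_reduce
    rw [Real.rpow_def_of_pos hx.1]
    ring_nf
  rw [hcong]
  have hint : IntegrableOn (fun x : ℝ => x ^ (-l)) (Set.Ioc 0 1) := by
    have := intervalIntegral.intervalIntegrable_rpow' (a := 0) (b := 1) (by linarith : (-1:ℝ) < -l)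
    rwa [intervalIntegrable_iff_integrableOn_Ioc_of_le zero_le_one] at this
  rw [← MeasureTheory.ofReal_integral_eq_lintegral_ofReal hint]
  · congr 1
    rw [← intervalIntegral.integral_of_le zero_le_one]
    rw [integral_rpow (Or.inl (by linarith))]
    rw [Real.one_rpow, Real.zero_rpow (by linarith)]
    field_simp
    ring
  · filter_upwards [MeasureTheory.ae_restrict_mem measurableSet_Ioc] with x hx
    exact Real.rpow_nonneg hx.1.le _

theorem stmt13 (n : ℕ) (hn : 1 ≤ n) (δ : ℝ) (hδ : δ ∈ Set.Ioo (0:ℝ) 1) :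
    (Measure.pi fun _ : Fin n => volume.restrict (Set.Icc (0:ℝ) 1))
        {u : Fin n → ℝ |
          (n : ℝ) + Real.sqrt (2 * n * Real.log (1/δ)) + Real.log (1/δ) <
            ∑ i, -Real.log (u i)} ≤ ENNReal.ofReal δ := by
  obtain ⟨hδ0, hδ1⟩ := hδ
  have hn0 : (0:ℝ) < n := by exact_mod_cast hn
  set L : ℝ := Real.log (1/δ) with hLdef
  have hL : 0 < L := Real.log_pos (by rw [lt_div_iff₀ hδ0]; linarith)
  set s : ℝ := Real.sqrt (2*L/n) with hsdef
  have hs : 0 < s := Real.sqrt_pos.mpr (by positivity)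
  have hs2 : (n:ℝ) * s^2 = 2*L := by
    rw [hsdef, Real.sq_sqrt (by positivity)]; field_simp
  have hns : Real.sqrt (2*n*L) = n * s := by
    rw [hsdef, ← Real.sqrt_sq hn0.le, ← Real.sqrt_mul (sq_nonneg _)]
    congr 1; field_simp; rw [Real.sq_sqrt (sq_nonneg _)]
  set l : ℝ := s/(1+s) with hldef
  have h1s : 0 < 1 + s := by linarith
  have hl0 : 0 ≤ l := by positivity
  have hl1 : l < 1 := by rw [hldef, div_lt_one h1s]; linarith
  have h1l : 1 - l = (1+s)⁻¹ := by rw [hldef]; field_simp; ring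
  set t : ℝ := (n:ℝ) + Real.sqrt (2*↑n*L) + L with htdef
  have hkey : Real.exp (-(l*t)) * (1/(1-l))^n ≤ δ := by
    have h1 : 1/(1-l) = 1+s := by rw [h1l, one_div, inv_inv]
    have hlog : Real.log (1+s) ≤ ((1+s) - (1+s)⁻¹)/2 := aux_log _ (by linarith)
    have hpow : ((1+s):ℝ)^n = Real.exp (n * Real.log (1+s)) := by
      rw [← Real.log_pow, Real.exp_log (pow_pos h1s n)]
    rw [h1, hpow, ← Real.exp_add, ← Real.exp_log hδ0]
    apply Real.exp_le_exp.mpr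
    have hLd : Real.log δ = -L := by rw [hLdef, one_div, Real.log_inv]; ring
    have hmul : (n:ℝ) * Real.log (1+s) ≤ n * (((1+s) - (1+s)⁻¹)/2) :=
      mul_le_mul_of_nonneg_left hlog hn0.le
    have hid : -(l*t) + (n:ℝ) * (((1+s) - (1+s)⁻¹)/2) = -L := by
      rw [htdef, hns, hldef]
      field_simp
      nlinarith [hs2]
    rw [hLd, ← hid]
    exact add_le_add_right hmul _
  set ν := volume.restrict (Set.Icc (0:ℝ) 1) with hν
  set μ := Measure.pi (fun _ : Fin n => ν) with hμ
  set g : ℝ → ℝ≥0∞ := fun x => ENNReal.ofReal (Real.exp (-(l * Real.log x))) with hgdef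
  have hg : Measurable g :=
    ENNReal.measurable_ofReal.comp (Real.measurable_exp.comp (Real.measurable_log.const_mul l).neg)
  set f : (Fin n → ℝ) → ℝ≥0∞ := fun u => ∏ i, g (u i) with hfdef
  have hf : Measurable f := Finset.measurable_prod _ fun i _ => hg.comp (measurable_pi_apply i)
  set ε : ℝ≥0∞ := ENNReal.ofReal (Real.exp (l*t)) with hεdef
  have hε0 : ε ≠ 0 := by
    simp only [hεdef, ne_eq, ENNReal.ofReal_eq_zero, not_le]
    exact Real.exp_pos _
  have hεtop : ε ≠ ⊤ := ENNReal.ofReal_ne_top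
  have hsub : {u : Fin n → ℝ | t < ∑ i, -Real.log (u i)} ⊆ {u | ε ≤ f u} := by
    intro u hu
    simp only [Set.mem_setOf_eq] at hu ⊢
    have h2 : Real.exp (l*t) ≤ Real.exp (l * ∑ i, -Real.log (u i)) :=
      Real.exp_le_exp.mpr (mul_le_mul_of_nonneg_left hu.le hl0)
    have h3 : Real.exp (l * ∑ i, -Real.log (u i)) = ∏ i, Real.exp (-(l * Real.log (u i))) := by
      rw [Finset.mul_sum, ← Real.exp_sum]
      congr 1
      apply Finset.sum_congr rfl
      intros; ring
    calc ε ≤ ENNReal.ofReal (∏ i, Real.exp (-(l * Real.log (u i)))) := by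
          rw [hεdef]; exact ENNReal.ofReal_le_ofReal (h3 ▸ h2)
      _ = f u := by
          rw [hfdef]
          exact ENNReal.ofReal_prod_of_nonneg (fun i _ => (Real.exp_pos _).le)
  have hmarkov := mul_meas_ge_le_lintegral₀ (μ := μ) hf.aemeasurable ε
  have hle : μ {u : Fin n → ℝ | t < ∑ i, -Real.log (u i)} ≤ (∫⁻ u, f u ∂μ) / ε := by
    rw [ENNReal.le_div_iff_mul_le (Or.inl hε0) (Or.inl hεtop)]
    calc μ {u : Fin n → ℝ | t < ∑ i, -Real.log (u i)} * ε
        = ε * μ {u : Fin n → ℝ | t < ∑ i, -Real.log (u i)} := mul_comm _ _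
      _ ≤ ε * μ {u | ε ≤ f u} := mul_le_mul_right (measure_mono hsub) ε
      _ ≤ ∫⁻ u, f u ∂μ := hmarkov
  have h1lpos : (0:ℝ) ≤ 1/(1-l) := by
    rw [one_div, h1l, inv_inv]; linarith
  have hlint : ∫⁻ u, f u ∂μ = ENNReal.ofReal ((1/(1-l))^n) := by
    rw [hfdef, hμ, lintegral_pi_pow ν hg, hν, hgdef, coord_integral hl1,
      ← ENNReal.ofReal_pow h1lpos]
  refine le_trans hle ?_
  rw [hlint, div_eq_mul_inv, hεdef, ← ENNReal.ofReal_inv_of_pos (Real.exp_pos _),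
    ← Real.exp_neg, ← ENNReal.ofReal_mul (pow_nonneg h1lpos n)]
  exact ENNReal.ofReal_le_ofReal (by rw [mul_comm]; exact hkey)
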